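/- Let f be convex differentiable on R^d and (x^k) be generated by adaptive gradient descent-2 with stepsize rule α_k = min{√(2/3 + θ_{k-1})α_{k-1}, α_{k-1}/√(max(2α_{k-1}²L_k² - 1, 0))}. Then min_{1 ≤ i ≤ k}(f(x^i) - f*) ≤ R²/(2 Σ_{i=1}^k α_i) where R² = ‖x^0 - x*‖² + 2α_0²‖∇f(x^0)‖² + α_0(f(x^0) - f*). -/

import Mathlib

open scoped RealInnerProductSpace

/-- Stepsize rule of adaptive gradient descent-2:
`α_k = min{√(2/3+θ_{k-1})·α_{k-1}, α_{k-1}/√([2α_{k-1}²L_k²-1]_+)}`,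
with the convention `a/0 = +∞` (when the bracket is nonpositive
the second bound is inactive). -/
noncomputable def adgd2Step (αp θp Lk : ℝ) : ℝ :=
  if 2 * αp ^ 2 * Lk ^ 2 - 1 ≤ 0 then Real.sqrt (2 / 3 + θp) * αp
  else min (Real.sqrt (2 / 3 + θp) * αp) (αp / Real.sqrt (2 * αp ^ 2 * Lk ^ 2 - 1))

/-- The gradient inequality for convex differentiable functions. -/
private lemma gradient_inequality {d : ℕ} {f : EuclideanSpace ℝ (Fin d) → ℝ}
    {f' : EuclideanSpace ℝ (Fin d) → EuclideanSpace ℝ (Fin d)}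
    (hconv : ConvexOn ℝ Set.univ f) (hgrad : ∀ z, HasGradientAt f (f' z) z)
    (u v : EuclideanSpace ℝ (Fin d)) :
    f u + ⟪f' u, v - u⟫ ≤ f v := by
  set φ : ℝ → ℝ := fun t : ℝ => f (t • (v - u) + u) with hφ
  have hc : HasDerivAt (fun t : ℝ => t • (v - u) + u) (v - u) 0 := by
    simpa using ((hasDerivAt_id (0 : ℝ)).smul_const (v - u)).add_const u
  have h0 : (fun t : ℝ => t • (v - u) + u) 0 = u := by simp
  have hder : HasDerivAt φ ⟪f' u, v - u⟫ 0 := by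
    have hf := (hgrad u).hasFDerivAt
    rw [← h0] at hf
    have := hf.comp_hasDerivAt (0 : ℝ) hc
    simp only [InnerProductSpace.toDual_apply_apply, zero_smul, zero_add] at this
    exact this
  have hφconv : ConvexOn ℝ Set.univ φ := by
    have h := hconv.comp_affineMap (AffineMap.lineMap u v (k := ℝ))
    have heq : (f ∘ (AffineMap.lineMap u v : ℝ →ᵃ[ℝ] EuclideanSpace ℝ (Fin d))) = φ := by
      funext t
      simp [hφ, AffineMap.lineMap_apply_module', Function.comp]
    rw [heq] at h
    simpa using h
  have hslope := hφconv.le_slope_of_hasDerivAt (Set.mem_univ (0 : ℝ)) (Set.mem_univ (1 : ℝ))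
    one_pos hder
  rw [slope_def_field] at hslope
  have h1 : φ 1 = f v := by simp [hφ]
  have h00 : φ 0 = f u := by simp [hφ]
  rw [h1, h00] at hslope
  have : ⟪f' u, v - u⟫ ≤ f v - f u := by
    simpa using hslope
  linarith

private lemma norm_sub_smul_sq {d : ℕ} (a b : EuclideanSpace ℝ (Fin d)) (s : ℝ) :
    ‖a - s • b‖ ^ 2 = ‖a‖ ^ 2 - 2 * s * ⟪b, a⟫ + s ^ 2 * ‖b‖ ^ 2 := by
  rw [norm_sub_sq_real, real_inner_smul_right, norm_smul, mul_pow, Real.norm_eq_abs, sq_abs,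
    real_inner_comm]
  ring

private lemma sum_Icc_one (g : ℕ → ℝ) (n : ℕ) :
    ∑ i ∈ Finset.Icc 1 (n + 1), g i = ∑ i ∈ Finset.range (n + 1), g (i + 1) := by
  induction n with
  | zero => simp
  | succ m ih =>
    rw [Finset.sum_Icc_succ_top (by omega : 1 ≤ m + 1 + 1), Finset.sum_range_succ, ih]

theorem adgd2_rate {d : ℕ}
    (f : EuclideanSpace ℝ (Fin d) → ℝ) (f' : EuclideanSpace ℝ (Fin d) → EuclideanSpace ℝ (Fin d))
    (hconv : ConvexOn ℝ Set.univ f)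
    (hgrad : ∀ z, HasGradientAt f (f' z) z)
    (hloclip : LocallyLipschitz f')
    (x : ℕ → EuclideanSpace ℝ (Fin d)) (α θ L : ℕ → ℝ)
    (xstar : EuclideanSpace ℝ (Fin d)) (hmin : ∀ y, f xstar ≤ f y)
    (hα0 : 0 < α 0) (hθ0 : θ 0 = 1 / 3)
    (hL : ∀ k ≥ 1, L k = ‖f' (x k) - f' (x (k - 1))‖ / ‖x k - x (k - 1)‖)
    (hα : ∀ k ≥ 1, α k = adgd2Step (α (k - 1)) (θ (k - 1)) (L k))
    (hθ : ∀ k ≥ 1, θ k = α k / α (k - 1))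
    (hx : ∀ k, x (k + 1) = x k - α k • f' (x k)) :
    ∀ k ≥ 1, ∃ i ∈ Finset.Icc 1 k,
      f (x i) - f xstar ≤
        (‖x 0 - xstar‖ ^ 2 + 2 * (α 0) ^ 2 * ‖f' (x 0)‖ ^ 2 + α 0 * (f (x 0) - f xstar)) /
          (2 * ∑ i ∈ Finset.Icc 1 k, α i) := by
  -- abbreviations (not rewriting the goal)
  set Δ : ℕ → ℝ := fun k => f (x k) - f xstar with hΔdef
  set G : ℕ → ℝ := fun k => ‖f' (x k)‖ ^ 2 with hGdef
  set T : ℕ → ℝ := fun k => α k * θ k with hTdef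
  set Φ : ℕ → ℝ := fun k => ‖x k - xstar‖ ^ 2 + 2 * α k ^ 2 * G k with hΦdef
  -- positivity of stepsizes and ratios
  have hpos : ∀ k, 0 < α k ∧ 0 < θ k := by
    intro k
    induction k with
    | zero => exact ⟨hα0, by rw [hθ0]; norm_num⟩
    | succ n ih =>
      have hAe : α (n + 1) = adgd2Step (α n) (θ n) (L (n + 1)) := by
        simpa using hα (n + 1) (Nat.le_add_left 1 n)
      have hstep : 0 < adgd2Step (α n) (θ n) (L (n + 1)) := by
        unfold adgd2Step
        have h23 : 0 < Real.sqrt (2 / 3 + θ n) := Real.sqrt_pos.mpr (by linarith [ih.2])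
        split_ifs with h
        · exact mul_pos h23 ih.1
        · exact lt_min (mul_pos h23 ih.1)
            (div_pos ih.1 (Real.sqrt_pos.mpr (by linarith [not_le.mp h])))
      have hApos : 0 < α (n + 1) := hAe ▸ hstep
      have hTe : θ (n + 1) = α (n + 1) / α n := by
        simpa using hθ (n + 1) (Nat.le_add_left 1 n)
      exact ⟨hApos, by rw [hTe]; exact div_pos hApos ih.1⟩
  -- stepsize rule consequences
  have hstepA : ∀ n, α (n + 1) ^ 2 ≤ (2 / 3 + θ n) * α n ^ 2 := by
    intro n
    have h23 : (0 : ℝ) ≤ 2 / 3 + θ n := by linarith [(hpos n).2]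
    have hAe : α (n + 1) = adgd2Step (α n) (θ n) (L (n + 1)) := by
      simpa using hα (n + 1) (Nat.le_add_left 1 n)
    have hle : α (n + 1) ≤ Real.sqrt (2 / 3 + θ n) * α n := by
      rw [hAe]; unfold adgd2Step; split_ifs
      · exact le_refl _
      · exact min_le_left _ _
    calc α (n + 1) ^ 2 ≤ (Real.sqrt (2 / 3 + θ n) * α n) ^ 2 :=
          pow_le_pow_left₀ (hpos (n + 1)).1.le hle 2
      _ = (2 / 3 + θ n) * α n ^ 2 := by rw [mul_pow, Real.sq_sqrt h23]
  have hstepB : ∀ n, α (n + 1) ^ 2 * (2 * α n ^ 2 * L (n + 1) ^ 2 - 1) ≤ α n ^ 2 := by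
    intro n
    have hAe : α (n + 1) = adgd2Step (α n) (θ n) (L (n + 1)) := by
      simpa using hα (n + 1) (Nat.le_add_left 1 n)
    by_cases h : 2 * α n ^ 2 * L (n + 1) ^ 2 - 1 ≤ 0
    · have h1 : α (n + 1) ^ 2 * (2 * α n ^ 2 * L (n + 1) ^ 2 - 1) ≤ 0 :=
        mul_nonpos_of_nonneg_of_nonpos (sq_nonneg _) h
      nlinarith [sq_nonneg (α n)]
    · push_neg at h
      have hb : 0 < 2 * α n ^ 2 * L (n + 1) ^ 2 - 1 := by linarith
      have hle : α (n + 1) ≤ α n / Real.sqrt (2 * α n ^ 2 * L (n + 1) ^ 2 - 1) := by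
        rw [hAe]; unfold adgd2Step; rw [if_neg (by linarith)]; exact min_le_right _ _
      have h1 : α (n + 1) ^ 2 ≤ (α n / Real.sqrt (2 * α n ^ 2 * L (n + 1) ^ 2 - 1)) ^ 2 :=
        pow_le_pow_left₀ (hpos (n + 1)).1.le hle 2
      rw [div_pow, Real.sq_sqrt hb.le] at h1
      exact (le_div_iff₀ hb).mp h1
  -- convexity facts
  have hΔnn : ∀ k, 0 ≤ Δ k := fun k => sub_nonneg.mpr (hmin (x k))
  have hconv1 : ∀ k, Δ k ≤ ⟪f' (x k), x k - xstar⟫ := by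
    intro k
    have h := gradient_inequality hconv hgrad (x k) xstar
    have he : ⟪f' (x k), xstar - x k⟫ = -⟪f' (x k), x k - xstar⟫ := by
      rw [← inner_neg_right, neg_sub]
    rw [he] at h
    simp only [hΔdef]
    linarith
  have hxstep : ∀ k, x (k + 1) - xstar = (x k - xstar) - α k • f' (x k) := by
    intro k; rw [hx k]; abel
  have hxdiff : ∀ k, x (k + 1) - x k = -(α k • f' (x k)) := by
    intro k; rw [hx k]; abel
  have hxdiff' : ∀ k, x k - x (k + 1) = α k • f' (x k) := by
    intro k; rw [hx k]; abel
  have hF4 : ∀ k, ‖x (k + 1) - xstar‖ ^ 2 ≤ ‖x k - xstar‖ ^ 2 - 2 * α k * Δ k + α k ^ 2 * G k := by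
    intro k
    have e : ‖x (k + 1) - xstar‖ ^ 2
        = ‖x k - xstar‖ ^ 2 - 2 * α k * ⟪f' (x k), x k - xstar⟫ + α k ^ 2 * G k := by
      rw [hxstep k, norm_sub_smul_sq]
    have hm := mul_le_mul_of_nonneg_left (hconv1 k)
      (by linarith [(hpos k).1] : (0 : ℝ) ≤ 2 * α k)
    linarith [e.le, e.ge]
  have hF6 : ∀ k, ‖f' (x (k + 1)) - f' (x k)‖ ^ 2 = L (k + 1) ^ 2 * (α k ^ 2 * G k) := by
    intro k
    have hnx : ‖x (k + 1) - x k‖ ^ 2 = α k ^ 2 * G k := by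
      rw [hxdiff k, norm_neg, norm_smul, mul_pow, Real.norm_eq_abs, sq_abs]
    have hLk : L (k + 1) = ‖f' (x (k + 1)) - f' (x k)‖ / ‖x (k + 1) - x k‖ := by
      simpa using hL (k + 1) (Nat.le_add_left 1 k)
    by_cases h0 : ‖x (k + 1) - x k‖ = 0
    · have hxx : x (k + 1) = x k := by
        have := norm_sub_eq_zero_iff.mp h0
        exact this
      rw [← hnx, h0, hxx]
      simp
    · rw [hLk, ← hnx, div_pow, div_mul_cancel₀]
      exact pow_ne_zero 2 h0
  have hF7 : ∀ k, G (k + 1)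
      = ‖f' (x (k + 1)) - f' (x k)‖ ^ 2 + 2 * ⟪f' (x (k + 1)), f' (x k)⟫ - G k := by
    intro k
    have h := norm_sub_sq_real (f' (x (k + 1))) (f' (x k))
    simp only [hGdef]
    linarith
  have hconv2 : ∀ k, α k * ⟪f' (x (k + 1)), f' (x k)⟫ ≤ Δ k - Δ (k + 1) := by
    intro k
    have h := gradient_inequality hconv hgrad (x (k + 1)) (x k)
    rw [hxdiff' k, real_inner_smul_right] at h
    simp only [hΔdef]
    linarith
  have hF8 : ∀ k, Δ k - Δ (k + 1) ≤ α k * G k := by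
    intro k
    have h := gradient_inequality hconv hgrad (x k) (x (k + 1))
    rw [hxdiff k, inner_neg_right, real_inner_smul_right, real_inner_self_eq_norm_sq] at h
    simp only [hΔdef, hGdef]
    linarith
  -- ratio quantities
  have hT1 : ∀ n, T (n + 1) * α n = α (n + 1) ^ 2 := by
    intro n
    have hTe : θ (n + 1) = α (n + 1) / α n := by
      simpa using hθ (n + 1) (Nat.le_add_left 1 n)
    have hαn : α n ≠ 0 := (hpos n).1.ne'
    simp only [hTdef, hTe]
    rw [mul_assoc, div_mul_cancel₀ _ hαn, ← sq]
  have hTnn : ∀ k, 0 ≤ T k := fun k => le_of_lt (mul_pos (hpos k).1 (hpos k).2)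
  have hvnn : ∀ k, 3 * T (k + 1) ≤ 2 * α k + 3 * T k := by
    intro k
    have hαk := (hpos k).1
    have h2 : T (k + 1) * α k ≤ (2 / 3 * α k + T k) * α k := by
      rw [hT1 k]
      calc α (k + 1) ^ 2 ≤ (2 / 3 + θ k) * α k ^ 2 := hstepA k
        _ = (2 / 3 * α k + T k) * α k := by simp only [hTdef]; ring
    have := le_of_mul_le_mul_right h2 hαk
    linarith
  have hGnn : ∀ k, 0 ≤ G k := by
    intro k; simp only [hGdef]; positivity
  -- the per-step Lyapunov inequality
  have hSTEP : ∀ k, Φ (k + 1) + 3 * T (k + 1) * Δ (k + 1)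
      + (2 * α k + 3 * T k - 3 * T (k + 1)) * Δ k ≤ Φ k + 3 * T k * Δ k := by
    intro k
    have e6 := hF6 k
    have e7 := hF7 k
    have h4 := hF4 k
    have eT := hT1 k
    have hTp : 0 ≤ T (k + 1) := hTnn (k + 1)
    have hGk := hGnn k
    -- s3 : 2 α_{k+1}² ‖g_{k+1} - g_k‖² ≤ (α_k² + α_{k+1}²) G_k
    have s3 : 2 * α (k + 1) ^ 2 * ‖f' (x (k + 1)) - f' (x k)‖ ^ 2
        ≤ (α k ^ 2 + α (k + 1) ^ 2) * G k := by
      have hb := mul_le_mul_of_nonneg_right (hstepB k) hGk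
      rw [e6]
      nlinarith [hb]
    -- s4 : 4 α_{k+1}² ⟪g_{k+1}, g_k⟫ ≤ 4 T_{k+1} (Δ_k - Δ_{k+1})
    have s4 : 4 * α (k + 1) ^ 2 * ⟪f' (x (k + 1)), f' (x k)⟫
        ≤ 4 * T (k + 1) * (Δ k - Δ (k + 1)) := by
      have hm := mul_le_mul_of_nonneg_left (hconv2 k)
        (by linarith : (0 : ℝ) ≤ 4 * T (k + 1))
      calc 4 * α (k + 1) ^ 2 * ⟪f' (x (k + 1)), f' (x k)⟫
          = 4 * T (k + 1) * (α k * ⟪f' (x (k + 1)), f' (x k)⟫) := by rw [← eT]; ring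
        _ ≤ 4 * T (k + 1) * (Δ k - Δ (k + 1)) := hm
    -- s5 : T_{k+1} (Δ_k - Δ_{k+1}) ≤ α_{k+1}² G_k
    have s5 : T (k + 1) * (Δ k - Δ (k + 1)) ≤ α (k + 1) ^ 2 * G k := by
      have hm := mul_le_mul_of_nonneg_left (hF8 k) hTp
      calc T (k + 1) * (Δ k - Δ (k + 1)) ≤ T (k + 1) * (α k * G k) := hm
        _ = α (k + 1) ^ 2 * G k := by rw [← eT]; ring
    simp only [hΦdef]
    rw [e7]
    nlinarith [h4, s3, s4, s5]
  -- telescoping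
  have htel : ∀ K, Φ K + 3 * T K * Δ K
      + ∑ k ∈ Finset.range K, (2 * α k + 3 * T k - 3 * T (k + 1)) * Δ k
      ≤ Φ 0 + 3 * T 0 * Δ 0 := by
    intro K
    induction K with
    | zero => simp
    | succ n ih =>
      rw [Finset.sum_range_succ]
      have := hSTEP n
      linarith
  -- Cauchy-Schwarz bound 2 α_k Δ_k ≤ Φ_k
  have hCS : ∀ k, 2 * α k * Δ k ≤ Φ k := by
    intro k
    have h1 : Δ k ≤ ‖f' (x k)‖ * ‖x k - xstar‖ :=
      (hconv1 k).trans (real_inner_le_norm _ _)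
    have hαk := (hpos k).1
    have hm := mul_le_mul_of_nonneg_left h1 (by linarith : (0 : ℝ) ≤ 2 * α k)
    simp only [hΦdef, hGdef]
    nlinarith [sq_nonneg (α k * ‖f' (x k)‖ - ‖x k - xstar‖), sq_nonneg (α k * ‖f' (x k)‖)]
  -- final assembly
  intro K hK
  obtain ⟨K', rfl⟩ : ∃ n, K = n + 1 := ⟨K - 1, by omega⟩
  obtain ⟨i₀, hi₀m, hi₀min⟩ := Finset.exists_min_image (Finset.Icc 1 (K' + 1))
    (fun i => Δ i) ⟨1, Finset.mem_Icc.mpr ⟨le_refl 1, by omega⟩⟩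
  refine ⟨i₀, hi₀m, ?_⟩
  -- sums over the tail
  have hSsum : ∑ i ∈ Finset.Icc 1 (K' + 1), α i
      = (∑ i ∈ Finset.range K', α (i + 1)) + α (K' + 1) := by
    rw [sum_Icc_one α K', Finset.sum_range_succ]
  have hSpos : 0 < ∑ i ∈ Finset.Icc 1 (K' + 1), α i := by
    rw [sum_Icc_one α K']
    exact Finset.sum_pos (fun i _ => (hpos (i + 1)).1)
      (Finset.nonempty_range_iff.mpr (by omega))
  -- split the telescoped sum
  have hsplit : ∑ k ∈ Finset.range (K' + 1), (2 * α k + 3 * T k - 3 * T (k + 1)) * Δ k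
      = (∑ i ∈ Finset.range K', (2 * α (i + 1) + 3 * T (i + 1) - 3 * T (i + 1 + 1)) * Δ (i + 1))
        + (2 * α 0 + 3 * T 0 - 3 * T 1) * Δ 0 :=
    Finset.sum_range_succ' _ _
  -- weight sum identity
  have hwsum : ∑ i ∈ Finset.range K', (2 * α (i + 1) + 3 * T (i + 1) - 3 * T (i + 1 + 1))
      = 2 * (∑ i ∈ Finset.range K', α (i + 1)) + (3 * T 1 - 3 * T (K' + 1)) := by
    have htele := Finset.sum_range_sub' (fun i => 3 * T (i + 1)) K'
    calc ∑ i ∈ Finset.range K', (2 * α (i + 1) + 3 * T (i + 1) - 3 * T (i + 1 + 1))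
        = ∑ i ∈ Finset.range K',
            (2 * α (i + 1) + (3 * T (i + 1) - 3 * T (i + 1 + 1))) := by
          apply Finset.sum_congr rfl; intro i _; ring
      _ = (∑ i ∈ Finset.range K', 2 * α (i + 1))
            + ∑ i ∈ Finset.range K', (3 * T (i + 1) - 3 * T (i + 1 + 1)) :=
          Finset.sum_add_distrib
      _ = 2 * (∑ i ∈ Finset.range K', α (i + 1)) + (3 * T 1 - 3 * T (K' + 1)) := by
          rw [← Finset.mul_sum, htele]
  -- lower bound the tail sum by the min
  have hlow : Δ i₀ * (∑ i ∈ Finset.range K', (2 * α (i + 1) + 3 * T (i + 1) - 3 * T (i + 1 + 1)))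
      ≤ ∑ i ∈ Finset.range K', (2 * α (i + 1) + 3 * T (i + 1) - 3 * T (i + 1 + 1)) * Δ (i + 1) := by
    rw [Finset.mul_sum]
    apply Finset.sum_le_sum
    intro i hi
    have hiK : i + 1 ∈ Finset.Icc 1 (K' + 1) := by
      rw [Finset.mem_Icc]
      exact ⟨by omega, by have := Finset.mem_range.mp hi; omega⟩
    have hv : 0 ≤ 2 * α (i + 1) + 3 * T (i + 1) - 3 * T (i + 1 + 1) := by
      linarith [hvnn (i + 1)]
    calc Δ i₀ * (2 * α (i + 1) + 3 * T (i + 1) - 3 * T (i + 1 + 1))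
        ≤ Δ (i + 1) * (2 * α (i + 1) + 3 * T (i + 1) - 3 * T (i + 1 + 1)) :=
          mul_le_mul_of_nonneg_right (hi₀min (i + 1) hiK) hv
      _ = (2 * α (i + 1) + 3 * T (i + 1) - 3 * T (i + 1 + 1)) * Δ (i + 1) := by ring
  -- combine everything
  have hmain : Δ i₀ * (2 * ∑ i ∈ Finset.Icc 1 (K' + 1), α i) ≤ Φ 0 + 3 * T 0 * Δ 0 := by
    have htelK := htel (K' + 1)
    rw [hsplit] at htelK
    have hv0 : 0 ≤ (2 * α 0 + 3 * T 0 - 3 * T 1) * Δ 0 :=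
      mul_nonneg (by linarith [hvnn 0]) (hΔnn 0)
    have hCSK := hCS (K' + 1)
    -- Δ i₀ bounds at the last index
    have hΔK : Δ i₀ ≤ Δ (K' + 1) :=
      hi₀min (K' + 1) (Finset.mem_Icc.mpr ⟨by omega, le_refl _⟩)
    have hm1 : Δ i₀ * (3 * T (K' + 1)) ≤ Δ (K' + 1) * (3 * T (K' + 1)) :=
      mul_le_mul_of_nonneg_right hΔK (by linarith [hTnn (K' + 1)])
    have hm2 : Δ i₀ * (2 * α (K' + 1)) ≤ Δ (K' + 1) * (2 * α (K' + 1)) :=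
      mul_le_mul_of_nonneg_right hΔK (by linarith [(hpos (K' + 1)).1])
    have hT1nn : 0 ≤ 3 * T 1 := by linarith [hTnn 1]
    have hΔi₀ : 0 ≤ Δ i₀ := hΔnn i₀
    have hΦK := hΦdef
    -- main chain
    have hchain : Δ i₀ * (2 * ∑ i ∈ Finset.Icc 1 (K' + 1), α i)
        ≤ Δ i₀ * (∑ i ∈ Finset.range K', (2 * α (i + 1) + 3 * T (i + 1) - 3 * T (i + 1 + 1)))
          + Δ i₀ * (3 * T (K' + 1)) + Δ i₀ * (2 * α (K' + 1)) := by
      rw [hwsum, hSsum]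
      nlinarith [mul_nonneg hΔi₀ hT1nn]
    calc Δ i₀ * (2 * ∑ i ∈ Finset.Icc 1 (K' + 1), α i)
        ≤ Δ i₀ * (∑ i ∈ Finset.range K', (2 * α (i + 1) + 3 * T (i + 1) - 3 * T (i + 1 + 1)))
          + Δ i₀ * (3 * T (K' + 1)) + Δ i₀ * (2 * α (K' + 1)) := hchain
      _ ≤ (∑ i ∈ Finset.range K', (2 * α (i + 1) + 3 * T (i + 1) - 3 * T (i + 1 + 1)) * Δ (i + 1))
          + Δ (K' + 1) * (3 * T (K' + 1)) + Δ (K' + 1) * (2 * α (K' + 1)) := by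
          linarith [hlow, hm1, hm2]
      _ ≤ Φ 0 + 3 * T 0 * Δ 0 := by linarith [htelK, hv0, hCSK]
  -- conclude
  have hT0 : 3 * T 0 = α 0 := by simp only [hTdef, hθ0]; ring
  rw [le_div_iff₀ (by linarith : (0 : ℝ) < 2 * ∑ i ∈ Finset.Icc 1 (K' + 1), α i)]
  have hnum : Φ 0 + 3 * T 0 * Δ 0
      = ‖x 0 - xstar‖ ^ 2 + 2 * α 0 ^ 2 * ‖f' (x 0)‖ ^ 2 + α 0 * (f (x 0) - f xstar) := by
    simp only [hΦdef, hGdef, hΔdef, hTdef, hθ0]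
    ring
  have : Δ i₀ = f (x i₀) - f xstar := by simp only [hΔdef]
  rw [← this, ← hnum]
  exact hmain
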